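/- arXiv:1308.1138 — 3 statements merged into one kernel-verified Lean document; each statement's English description precedes it below -/
import Mathlib

section
/- Basis terms have unit types: if b is a basis term (a variable or a λ-abstraction) and Γ ⊢ b : T is derivable in λ^vec, then there exists a unit type U with T ≡ U. -/
/-!
Formalization of the vectorial λ-calculus (Arrighi, Díaz-Caro, Valiron):
syntax of types and terms, type equivalence, typing rules, reduction, etc.
-/

universe u

/-- Types of λ^vec. Type variables come in two kinds, tagged by a `Bool`:
`true` for unit type variables 𝕌, `false` for general type variables 𝕏.
`fa b n U` is ∀X.U where X is the variable of kind `b` with index `n`. -/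
inductive VType (S : Type u) : Type u where
  | uvar : ℕ → VType S
  | gvar : ℕ → VType S
  | arrow : VType S → VType S → VType S
  | fa : Bool → ℕ → VType S → VType S
  | smul : S → VType S → VType S
  | add : VType S → VType S → VType S

namespace VType

variable {S : Type u}

/-- Unit types: U ::= 𝕌 | U → T | ∀𝕌.U | ∀𝕏.U -/
inductive IsUnit : VType S → Prop where
  | uvar (n : ℕ) : IsUnit (uvar n)
  | arrow {U T : VType S} : IsUnit U → IsUnit (arrow U T)
  | fa {b : Bool} {n : ℕ} {U : VType S} : IsUnit U → IsUnit (fa b n U)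

/-- 𝒰 ::= U | 𝕏 : a unit type or a general type variable. -/
def IsUG (T : VType S) : Prop := IsUnit T ∨ ∃ n, T = gvar n

/-- Free type variables (as kind-index pairs). -/
def freeTV : VType S → Set (Bool × ℕ)
  | uvar n => {(true, n)}
  | gvar n => {(false, n)}
  | arrow U T => freeTV U ∪ freeTV T
  | fa b n U => freeTV U \ {(b, n)}
  | smul _ T => freeTV T
  | add T R => freeTV T ∪ freeTV R

/-- Substitution of the type variable `v` by the type `A`;
it distributes homomorphically through `smul` and `add`. -/
def substT : VType S → (Bool × ℕ) → VType S → VType S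
  | uvar n, v, A => if v = (true, n) then A else uvar n
  | gvar n, v, A => if v = (false, n) then A else gvar n
  | arrow U T, v, A => arrow (substT U v A) (substT T v A)
  | fa b n U, v, A => if v = (b, n) then fa b n U else fa b n (substT U v A)
  | smul a T, v, A => smul a (substT T v A)
  | add T R, v, A => add (substT T v A) (substT R v A)

/-- The kind condition: a unit variable may only be substituted by a unit type. -/
def kindOK (v : Bool × ℕ) (A : VType S) : Prop := v.1 = true → IsUnit A

/-- ∀X⃗.T for a vector of variables. -/
def faMany (Xs : List (Bool × ℕ)) (T : VType S) : VType S :=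
  Xs.foldr (fun v T => fa v.1 v.2 T) T

/-- T[A⃗/X⃗] for vectors of variables and types. -/
def substMany (T : VType S) (Xs : List (Bool × ℕ)) (As : List (VType S)) : VType S :=
  (Xs.zip As).foldl (fun T p => substT T p.1 p.2) T

/-- The linear combination Σᵢ αᵢ·Tᵢ of a list of scalar–type pairs.
(The value on the empty list is irrelevant junk; it is only used on
nonempty lists.) -/
def ssumL [CommRing S] : List (S × VType S) → VType S
  | [] => smul 0 (uvar 0)
  | [p] => smul p.1 p.2
  | p :: l => add (smul p.1 p.2) (ssumL l)

end VType

/-- Equivalence of types: the smallest congruence satisfying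
1·T ≡ T, α·(β·T) ≡ (α×β)·T, α·T + α·R ≡ α·(T+R), α·T + β·T ≡ (α+β)·T,
commutativity and associativity of +. -/
inductive TEq {S : Type u} [CommRing S] : VType S → VType S → Prop where
  | refl (T : VType S) : TEq T T
  | symm {T R : VType S} : TEq T R → TEq R T
  | trans {T R Q : VType S} : TEq T R → TEq R Q → TEq T Q
  | oneSmul (T : VType S) : TEq (VType.smul 1 T) T
  | smulSmul (a b : S) (T : VType S) :
      TEq (VType.smul a (VType.smul b T)) (VType.smul (a * b) T)
  | smulAdd (a : S) (T R : VType S) :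
      TEq (VType.add (VType.smul a T) (VType.smul a R)) (VType.smul a (VType.add T R))
  | addSmul (a b : S) (T : VType S) :
      TEq (VType.add (VType.smul a T) (VType.smul b T)) (VType.smul (a + b) T)
  | comm (T R : VType S) : TEq (VType.add T R) (VType.add R T)
  | assoc (T R Q : VType S) :
      TEq (VType.add T (VType.add R Q)) (VType.add (VType.add T R) Q)
  | arrowCong {U V T R : VType S} : TEq U V → TEq T R → TEq (VType.arrow U T) (VType.arrow V R)
  | faCong (b : Bool) (n : ℕ) {T R : VType S} : TEq T R → TEq (VType.fa b n T) (VType.fa b n R)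
  | smulCong (a : S) {T R : VType S} : TEq T R → TEq (VType.smul a T) (VType.smul a R)
  | addCong {T T' R R' : VType S} :
      TEq T T' → TEq R R' → TEq (VType.add T R) (VType.add T' R')

/-- Terms of λ^vec. -/
inductive VTerm (S : Type u) : Type u where
  | var : ℕ → VTerm S
  | lam : ℕ → VTerm S → VTerm S
  | app : VTerm S → VTerm S → VTerm S
  | zero : VTerm S
  | smul : S → VTerm S → VTerm S
  | add : VTerm S → VTerm S → VTerm S

namespace VTerm

variable {S : Type u}

/-- Basis terms: variables and λ-abstractions. -/
def IsBasis : VTerm S → Prop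
  | var _ => True
  | lam _ _ => True
  | _ => False

/-- Free term variables. -/
def freeV : VTerm S → Set ℕ
  | var x => {x}
  | lam x t => freeV t \ {x}
  | app t r => freeV t ∪ freeV r
  | zero => ∅
  | smul _ t => freeV t
  | add t r => freeV t ∪ freeV r

def ClosedTerm (t : VTerm S) : Prop := freeV t = ∅

/-- Capture-avoiding substitution of the basis term `b` for the variable `x`;
it distributes homomorphically through linear combinations. -/
def substV : VTerm S → ℕ → VTerm S → VTerm S
  | var y, x, b => if y = x then b else var y
  | lam y t, x, b => if y = x then lam y t else lam y (substV t x b)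
  | app t r, x, b => app (substV t x b) (substV r x b)
  | zero, _, _ => zero
  | smul a t, x, b => smul a (substV t x b)
  | add t r, x, b => add (substV t x b) (substV r x b)

end VTerm

/-- Typing contexts: partial assignments of (unit) types to term variables. -/
def Ctx (S : Type u) := ℕ → Option (VType S)

def Ctx.extend {S : Type u} (Γ : Ctx S) (x : ℕ) (U : VType S) : Ctx S :=
  fun y => if y = x then some U else Γ y

/-- Free type variables of a context. -/
def Ctx.freeTV {S : Type u} (Γ : Ctx S) : Set (Bool × ℕ) :=
  {v | ∃ x U, Γ x = some U ∧ v ∈ VType.freeTV U}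

/-- Type substitution applied pointwise to a context. -/
def Ctx.substT {S : Type u} (Γ : Ctx S) (v : Bool × ℕ) (A : VType S) : Ctx S :=
  fun x => (Γ x).map (fun U => VType.substT U v A)

/-- The typing rules of the vectorial type system:
(ax), (0_I), (→_I), (→_E), (∀_I), (∀_E), (α_I), (+_I), (≡). -/
inductive Typing {S : Type u} [CommRing S] : Ctx S → VTerm S → VType S → Prop where
  | ax {Γ : Ctx S} {x : ℕ} {U : VType S} :
      Γ x = some U → VType.IsUnit U → Typing Γ (VTerm.var x) U
  | zeroI {Γ : Ctx S} {t : VTerm S} {T : VType S} :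
      Typing Γ t T → Typing Γ VTerm.zero (VType.smul 0 T)
  | arrI {Γ : Ctx S} {x : ℕ} {U : VType S} {t : VTerm S} {T : VType S} :
      VType.IsUnit U → Typing (Γ.extend x U) t T →
      Typing Γ (VTerm.lam x t) (VType.arrow U T)
  | arrE {Γ : Ctx S} {t r : VTerm S} (U : VType S) (Xs : List (Bool × ℕ))
      (p : S × VType S) (ps : List (S × VType S))
      (q : S × List (VType S)) (qs : List (S × List (VType S))) :
      VType.IsUnit U →
      (∀ w ∈ q :: qs, w.2.length = Xs.length ∧
        ∀ pr ∈ Xs.zip w.2, VType.kindOK pr.1 pr.2) →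
      Typing Γ t (VType.ssumL ((p :: ps).map
        (fun pi => (pi.1, VType.faMany Xs (VType.arrow U pi.2))))) →
      Typing Γ r (VType.ssumL ((q :: qs).map
        (fun qj => (qj.1, VType.substMany U Xs qj.2)))) →
      Typing Γ (VTerm.app t r)
        (VType.ssumL ((p :: ps).flatMap (fun pi => (q :: qs).map
          (fun qj => (pi.1 * qj.1, VType.substMany pi.2 Xs qj.2)))))
  | faI {Γ : Ctx S} {t : VTerm S} (v : Bool × ℕ)
      (p : S × VType S) (ps : List (S × VType S)) :
      v ∉ Γ.freeTV →
      (∀ w ∈ p :: ps, VType.IsUnit w.2) →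
      Typing Γ t (VType.ssumL (p :: ps)) →
      Typing Γ t (VType.ssumL ((p :: ps).map (fun w => (w.1, VType.fa v.1 v.2 w.2))))
  | faE {Γ : Ctx S} {t : VTerm S} (v : Bool × ℕ) (A : VType S)
      (p : S × VType S) (ps : List (S × VType S)) :
      VType.kindOK v A →
      (∀ w ∈ p :: ps, VType.IsUnit w.2) →
      Typing Γ t (VType.ssumL ((p :: ps).map (fun w => (w.1, VType.fa v.1 v.2 w.2)))) →
      Typing Γ t (VType.ssumL ((p :: ps).map (fun w => (w.1, VType.substT w.2 v A))))
  | smulI {Γ : Ctx S} {t : VTerm S} {T : VType S} (a : S) :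
      Typing Γ t T → Typing Γ (VTerm.smul a t) (VType.smul a T)
  | addI {Γ : Ctx S} {t r : VTerm S} {T R : VType S} :
      Typing Γ t T → Typing Γ r R → Typing Γ (VTerm.add t r) (VType.add T R)
  | equiv {Γ : Ctx S} {t : VTerm S} {T R : VType S} :
      Typing Γ t T → TEq T R → Typing Γ t R

/-- AC equivalence of terms (associativity and commutativity of +,
as a congruence). -/
inductive ACEq {S : Type u} : VTerm S → VTerm S → Prop where
  | refl (t : VTerm S) : ACEq t t
  | symm {t r : VTerm S} : ACEq t r → ACEq r t
  | trans {t r u : VTerm S} : ACEq t r → ACEq r u → ACEq t u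
  | comm (t r : VTerm S) : ACEq (VTerm.add t r) (VTerm.add r t)
  | assoc (t r u : VTerm S) :
      ACEq (VTerm.add t (VTerm.add r u)) (VTerm.add (VTerm.add t r) u)
  | lamCong (x : ℕ) {t r : VTerm S} : ACEq t r → ACEq (VTerm.lam x t) (VTerm.lam x r)
  | appCong {t t' r r' : VTerm S} :
      ACEq t t' → ACEq r r' → ACEq (VTerm.app t r) (VTerm.app t' r')
  | smulCong (a : S) {t r : VTerm S} : ACEq t r → ACEq (VTerm.smul a t) (VTerm.smul a r)
  | addCong {t t' r r' : VTerm S} :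
      ACEq t t' → ACEq r r' → ACEq (VTerm.add t r) (VTerm.add t' r')

/-- One-step reduction of λ^vec, labelled by a `Bool` which is `true`
exactly when the underlying rule is a factorisation rule (Group F).
Reduction acts modulo AC of +, and is closed under contexts. -/
inductive Red {S : Type u} [CommRing S] : Bool → VTerm S → VTerm S → Prop where
  -- Group E
  | zeroSmul (t : VTerm S) : Red false (VTerm.smul 0 t) VTerm.zero
  | oneSmul (t : VTerm S) : Red false (VTerm.smul 1 t) t
  | smulZero (a : S) : Red false (VTerm.smul a VTerm.zero) VTerm.zero
  | smulSmul (a b : S) (t : VTerm S) :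
      Red false (VTerm.smul a (VTerm.smul b t)) (VTerm.smul (a * b) t)
  | smulAdd (a : S) (t r : VTerm S) :
      Red false (VTerm.smul a (VTerm.add t r)) (VTerm.add (VTerm.smul a t) (VTerm.smul a r))
  -- Group F
  | factor (a b : S) (t : VTerm S) :
      Red true (VTerm.add (VTerm.smul a t) (VTerm.smul b t)) (VTerm.smul (a + b) t)
  | factor1 (a : S) (t : VTerm S) :
      Red true (VTerm.add (VTerm.smul a t) t) (VTerm.smul (a + 1) t)
  | factor2 (t : VTerm S) : Red true (VTerm.add t t) (VTerm.smul (1 + 1) t)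
  | addZero (t : VTerm S) : Red true (VTerm.add t VTerm.zero) t
  -- Group B
  | beta (x : ℕ) (t b : VTerm S) :
      VTerm.IsBasis b → Red false (VTerm.app (VTerm.lam x t) b) (VTerm.substV t x b)
  -- Group A
  | appAddL (t r u : VTerm S) :
      Red false (VTerm.app (VTerm.add t r) u) (VTerm.add (VTerm.app t u) (VTerm.app r u))
  | appAddR (t r u : VTerm S) :
      Red false (VTerm.app t (VTerm.add r u)) (VTerm.add (VTerm.app t r) (VTerm.app t u))
  | appSmulL (a : S) (t r : VTerm S) :
      Red false (VTerm.app (VTerm.smul a t) r) (VTerm.smul a (VTerm.app t r))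
  | appSmulR (a : S) (t r : VTerm S) :
      Red false (VTerm.app t (VTerm.smul a r)) (VTerm.smul a (VTerm.app t r))
  | appZeroL (t : VTerm S) : Red false (VTerm.app VTerm.zero t) VTerm.zero
  | appZeroR (t : VTerm S) : Red false (VTerm.app t VTerm.zero) VTerm.zero
  -- contextual rules
  | smulCtx {f : Bool} {t r : VTerm S} (a : S) :
      Red f t r → Red f (VTerm.smul a t) (VTerm.smul a r)
  | addCtx {f : Bool} {t r : VTerm S} (u : VTerm S) :
      Red f t r → Red f (VTerm.add u t) (VTerm.add u r)
  | appCtxR {f : Bool} {t r : VTerm S} (u : VTerm S) :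
      Red f t r → Red f (VTerm.app u t) (VTerm.app u r)
  | appCtxL {f : Bool} {t r : VTerm S} (u : VTerm S) :
      Red f t r → Red f (VTerm.app t u) (VTerm.app r u)
  | lamCtx {f : Bool} {t r : VTerm S} (x : ℕ) :
      Red f t r → Red f (VTerm.lam x t) (VTerm.lam x r)
  -- reduction modulo AC of +
  | ac {f : Bool} {t t' r r' : VTerm S} :
      ACEq t t' → Red f t' r' → ACEq r' r → Red f t r

/-- One-step reduction (by any rule). -/
def Red1 {S : Type u} [CommRing S] (t r : VTerm S) : Prop := ∃ f, Red f t r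

/-- Strong normalisation: every reduction sequence from `t` is finite. -/
def SN {S : Type u} [CommRing S] (t : VTerm S) : Prop :=
  Acc (fun a b : VTerm S => Red1 b a) t

/-- Algebraic contexts F(t⃗) ::= tᵢ | F(t⃗)+G(t⃗) | α·F(t⃗) | 0. -/
inductive AlgCtx (S : Type u) : Type u where
  | idx : ℕ → AlgCtx S
  | add : AlgCtx S → AlgCtx S → AlgCtx S
  | smul : S → AlgCtx S → AlgCtx S
  | zero : AlgCtx S

/-- Filling an algebraic context with a list of terms. -/
def AlgCtx.fill {S : Type u} : AlgCtx S → List (VTerm S) → VTerm S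
  | .idx i, ts => ts.getD i VTerm.zero
  | .add F G, ts => VTerm.add (F.fill ts) (G.fill ts)
  | .smul a F, ts => VTerm.smul a (F.fill ts)
  | .zero, _ => VTerm.zero

/-- `t` is not a λ-abstraction. -/
def NotLam {S : Type u} : VTerm S → Prop
  | VTerm.lam _ _ => False
  | _ => True

/-- Closed neutral terms: closed, not an abstraction, and reducing to something. -/
def Neutral {S : Type u} [CommRing S] (t : VTerm S) : Prop :=
  VTerm.ClosedTerm t ∧ NotLam t ∧ ∃ r, Red1 t r

/-- Reducibility candidates: sets of closed terms satisfying RC1–RC4. -/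
def IsRC {S : Type u} [CommRing S] (A : Set (VTerm S)) : Prop :=
  (∀ t ∈ A, VTerm.ClosedTerm t ∧ SN t) ∧
  (∀ t ∈ A, ∀ r, Red1 t r → r ∈ A) ∧
  (∀ t, Neutral t → (∀ r, Red1 t r → r ∈ A) → t ∈ A) ∧
  VTerm.zero ∈ A

/-- The arrow operation on candidates: closure under RC3 and RC4 of the set of
closed `t` with (t)0 ∈ B and (t)b ∈ B for every basis term b ∈ A. -/
inductive arrowSet {S : Type u} [CommRing S] (A B : Set (VTerm S)) : VTerm S → Prop where
  | base {t : VTerm S} : VTerm.ClosedTerm t → VTerm.app t VTerm.zero ∈ B →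
      (∀ b ∈ A, VTerm.IsBasis b → VTerm.app t b ∈ B) → arrowSet A B t
  | neutral {t : VTerm S} : Neutral t → (∀ r, Red1 t r → arrowSet A B r) → arrowSet A B t
  | zero : arrowSet A B VTerm.zero

/-- The sum Σᵢ 𝒜ᵢ of a family of candidates: closure under CC, RC2 and RC3
of the set of algebraic combinations F(t⃗) of terms each in some 𝒜ᵢ. -/
inductive sumSet {S : Type u} [CommRing S] {ι : Type*} (As : ι → Set (VTerm S)) :
    VTerm S → Prop where
  | base (F : AlgCtx S) (ts : List (VTerm S)) :
      (∀ t ∈ ts, ∃ i, t ∈ As i) → sumSet As (F.fill ts)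
  | red {t r : VTerm S} : sumSet As t → Red1 t r → sumSet As r
  | neutral {t : VTerm S} : Neutral t → (∀ r, Red1 t r → sumSet As r) → sumSet As t
  | cc (F : AlgCtx S) (ts : List (VTerm S)) {t : VTerm S} :
      sumSet As (F.fill ts) → t ∈ ts → sumSet As t

/-- The order ⊒ on types (`TGe T R` means T ⊒ R): the smallest reflexive,
transitive, congruent relation with (α+β)·T ⊒ α·T + β·T' whenever some term
can be typed with both α·T and β·T', and T ⊒ T + 0·R. -/
inductive TGe {S : Type u} [CommRing S] : VType S → VType S → Prop where
  | refl (T : VType S) : TGe T T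
  | trans {T R Q : VType S} : TGe T R → TGe R Q → TGe T Q
  | factor {Γ : Ctx S} {t : VTerm S} {a b : S} {T T' : VType S} :
      Typing Γ (VTerm.smul a t) (VType.smul a T) →
      Typing Γ (VTerm.smul b t) (VType.smul b T') →
      TGe (VType.smul (a + b) T) (VType.add (VType.smul a T) (VType.smul b T'))
  | addZero (T R : VType S) : TGe T (VType.add T (VType.smul 0 R))
  | addCong (Q : VType S) {T R : VType S} : TGe T R → TGe (VType.add T Q) (VType.add R Q)
  | smulCong (a : S) {T R : VType S} : TGe T R → TGe (VType.smul a T) (VType.smul a R)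
  | arrowCong (U : VType S) {T R : VType S} :
      TGe T R → TGe (VType.arrow U T) (VType.arrow U R)
  | faCong (b : Bool) (n : ℕ) {T R : VType S} :
      TGe T R → TGe (VType.fa b n T) (VType.fa b n R)

/-- The single-variable relation T ≻^t_{X,Γ} R of Definition 4.3. -/
inductive StepOrd {S : Type u} [CommRing S] (Γ : Ctx S) (t : VTerm S) (X : Bool × ℕ) :
    VType S → VType S → Prop where
  | faI {T R : VType S} (l : List (S × VType S)) :
      l ≠ [] → (∀ p ∈ l, VType.IsUnit p.2) →
      X ∉ Γ.freeTV → Typing Γ t T → Typing Γ t R →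
      TEq T (VType.ssumL l) →
      TEq R (VType.ssumL (l.map (fun p => (p.1, VType.fa X.1 X.2 p.2)))) →
      StepOrd Γ t X T R
  | faE {T R : VType S} (l : List (S × VType S)) (A : VType S) :
      l ≠ [] → (∀ p ∈ l, VType.IsUnit p.2) → VType.kindOK X A →
      X ∉ Γ.freeTV → Typing Γ t T → Typing Γ t R →
      TEq T (VType.ssumL (l.map (fun p => (p.1, VType.fa X.1 X.2 p.2)))) →
      TEq R (VType.ssumL (l.map (fun p => (p.1, VType.substT p.2 X A)))) →
      StepOrd Γ t X T R

/-- The relation T ≽^t_{𝒱,Γ} R of Definition 4.3. -/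
inductive TOrd {S : Type u} [CommRing S] (Γ : Ctx S) (t : VTerm S) :
    Set (Bool × ℕ) → VType S → VType S → Prop where
  | step {X : Bool × ℕ} {T R : VType S} : StepOrd Γ t X T R → TOrd Γ t {X} T R
  | trans {V₁ V₂ : Set (Bool × ℕ)} {T R Q : VType S} :
      TOrd Γ t V₁ T R → TOrd Γ t V₂ R Q → TOrd Γ t (V₁ ∪ V₂) T Q
  | ofEq (V : Set (Bool × ℕ)) {T R : VType S} : TEq T R → TOrd Γ t V T R

/-- Inner sum Σⱼ βⱼ·bⱼ of terms, with the convention that the empty sum is 0. -/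
def tsumI {S : Type u} : List (S × VTerm S) → VTerm S
  | [] => VTerm.zero
  | [p] => VTerm.smul p.1 p.2
  | p :: l => VTerm.add (VTerm.smul p.1 p.2) (tsumI l)

/-- Outer sum of a list of terms. -/
def tsumO {S : Type u} : List (VTerm S) → VTerm S
  | [] => VTerm.zero
  | [t] => t
  | t :: l => VTerm.add t (tsumO l)

section Aux

variable {S : Type} [CommRing S]

attribute [local instance] Classical.propDecidable

open VType

/-- Erase one top-level ∀ from each atom. -/
def unfa : VType S → VType S
  | .fa _ _ T => T
  | .smul a T => .smul a (unfa T)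
  | .add T R => .add (unfa T) (unfa R)
  | T => T

lemma unfa_TEq {T R : VType S} (h : TEq T R) : TEq (unfa T) (unfa R) := by
  induction h with
  | refl T => exact TEq.refl _
  | symm _ ih => exact ih.symm
  | trans _ _ ih1 ih2 => exact ih1.trans ih2
  | oneSmul T => exact TEq.oneSmul _
  | smulSmul a b T => exact TEq.smulSmul _ _ _
  | smulAdd a T R => exact TEq.smulAdd _ _ _
  | addSmul a b T => exact TEq.addSmul _ _ _
  | comm T R => exact TEq.comm _ _
  | assoc T R Q => exact TEq.assoc _ _ _
  | arrowCong h1 h2 ih1 ih2 => exact TEq.arrowCong h1 h2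
  | faCong b n h ih => exact h
  | smulCong a _ ih => exact TEq.smulCong _ ih
  | addCong _ _ ih1 ih2 => exact TEq.addCong ih1 ih2

lemma fa_inj {b : Bool} {n : ℕ} {T R : VType S}
    (h : TEq (VType.fa b n T) (VType.fa b n R)) : TEq T R := unfa_TEq h

lemma substT_TEq {T R : VType S} (h : TEq T R) (v : Bool × ℕ) (A : VType S) :
    TEq (VType.substT T v A) (VType.substT R v A) := by
  induction h with
  | refl T => exact TEq.refl _
  | symm _ ih => exact ih.symm
  | trans _ _ ih1 ih2 => exact ih1.trans ih2
  | oneSmul T => exact TEq.oneSmul _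
  | smulSmul a b T => exact TEq.smulSmul _ _ _
  | smulAdd a T R => exact TEq.smulAdd _ _ _
  | addSmul a b T => exact TEq.addSmul _ _ _
  | comm T R => exact TEq.comm _ _
  | assoc T R Q => exact TEq.assoc _ _ _
  | arrowCong h1 h2 ih1 ih2 => exact TEq.arrowCong ih1 ih2
  | faCong b n h ih =>
      simp only [VType.substT]
      split
      · exact TEq.faCong _ _ h
      · exact TEq.faCong _ _ ih
  | smulCong a _ ih => exact TEq.smulCong _ ih
  | addCong _ _ ih1 ih2 => exact TEq.addCong ih1 ih2

lemma unit_substT {U : VType S} (h : VType.IsUnit U) (v : Bool × ℕ) {A : VType S}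
    (hA : VType.kindOK v A) : VType.IsUnit (VType.substT U v A) := by
  induction h with
  | uvar n =>
      simp only [VType.substT]
      split
      · rename_i hv; exact hA (by rw [hv])
      · exact VType.IsUnit.uvar n
  | arrow hU ih => exact VType.IsUnit.arrow ih
  | fa hU ih =>
      simp only [VType.substT]
      split
      · exact VType.IsUnit.fa hU
      · exact VType.IsUnit.fa ih

/-- Formal coefficient of a type at an "atom", up to TEq. -/
noncomputable def phi : VType S → VType S → S
  | VType.smul a T, R => a * phi T R
  | VType.add T T', R => phi T R + phi T' R
  | T, R => if TEq T R then (1:S) else 0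

/-- Set of atoms occurring in a type (as their TEq-classes). -/
def suppS : VType S → Set (VType S)
  | VType.smul _ T => suppS T
  | VType.add T R => suppS T ∪ suppS R
  | T => {X | TEq T X}

lemma phi_unit {U : VType S} (h : VType.IsUnit U) (R : VType S) :
    phi U R = if TEq U R then (1:S) else 0 := by
  cases h <;> simp [phi]

lemma supp_unit {U : VType S} (h : VType.IsUnit U) :
    suppS U = {X | TEq U X} := by
  cases h <;> simp [suppS]

lemma phi_congr {T R : VType S} (h : TEq T R) : ∀ X, phi T X = phi R X := by
  induction h with
  | refl T => exact fun _ => rfl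
  | symm _ ih => exact fun X => (ih X).symm
  | trans _ _ ih1 ih2 => exact fun X => (ih1 X).trans (ih2 X)
  | oneSmul T => intro X; simp [phi]
  | smulSmul a b T => intro X; simp [phi, mul_assoc]
  | smulAdd a T R => intro X; simp [phi, mul_add]
  | addSmul a b T => intro X; simp [phi, add_mul]
  | comm T R => intro X; simp [phi, add_comm]
  | assoc T R Q => intro X; simp [phi, add_assoc]
  | arrowCong h1 h2 ih1 ih2 =>
      intro X
      have : TEq (VType.arrow _ _) X ↔ TEq (VType.arrow _ _) X :=
        ⟨fun h' => (TEq.arrowCong h1 h2).trans h', fun h' => ((TEq.arrowCong h1 h2).symm).trans h'⟩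
      simp only [phi]
      exact if_congr this.symm rfl rfl
  | faCong b n h ih =>
      intro X
      have hiff : TEq (VType.fa b n _) X ↔ TEq (VType.fa b n _) X :=
        ⟨fun h' => (TEq.faCong b n h).trans h', fun h' => ((TEq.faCong b n h).symm).trans h'⟩
      simp only [phi]
      exact if_congr hiff.symm rfl rfl
  | smulCong a _ ih => intro X; simp [phi, ih X]
  | addCong _ _ ih1 ih2 => intro X; simp [phi, ih1 X, ih2 X]

lemma supp_congr {T R : VType S} (h : TEq T R) : suppS T = suppS R := by
  induction h with
  | refl T => rfl
  | symm _ ih => exact ih.symm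
  | trans _ _ ih1 ih2 => exact ih1.trans ih2
  | oneSmul T => simp [suppS]
  | smulSmul a b T => simp [suppS]
  | smulAdd a T R => simp [suppS]
  | addSmul a b T => simp [suppS]
  | comm T R => exact Set.union_comm _ _
  | assoc T R Q => exact (Set.union_assoc _ _ _).symm
  | arrowCong h1 h2 ih1 ih2 =>
      simp only [suppS]
      ext X
      exact ⟨fun h' => (TEq.arrowCong h1 h2).symm.trans h', fun h' => (TEq.arrowCong h1 h2).trans h'⟩
  | faCong b n h ih =>
      simp only [suppS]
      ext X
      exact ⟨fun h' => (TEq.faCong b n h).symm.trans h', fun h' => (TEq.faCong b n h).trans h'⟩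
  | smulCong a _ ih => exact ih
  | addCong _ _ ih1 ih2 => simp only [suppS, ih1, ih2]

lemma ssumL_smul {V : VType S} :
    ∀ (p : S × VType S) (ps : List (S × VType S)),
      (∀ w ∈ p :: ps, TEq w.2 V) →
      TEq (VType.ssumL (p :: ps)) (VType.smul (((p :: ps).map Prod.fst).sum) V) := by
  intro p ps
  induction ps generalizing p with
  | nil =>
      intro hw
      simp only [VType.ssumL, List.map_cons, List.map_nil, List.sum_cons, List.sum_nil, add_zero]
      exact TEq.smulCong _ (hw p (by simp))
  | cons q rest ih =>
      intro hw
      have h1 : TEq (VType.ssumL (p :: q :: rest))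
          (VType.add (VType.smul p.1 V) (VType.smul (((q :: rest).map Prod.fst).sum) V)) := by
        simp only [VType.ssumL]
        exact TEq.addCong (TEq.smulCong _ (hw p (by simp)))
          (ih q (fun w hwm => hw w (List.mem_cons_of_mem _ hwm)))
      refine h1.trans ?_
      have := TEq.addSmul p.1 (((q :: rest).map Prod.fst).sum) V
      simpa using this

lemma phi_ssumL {U : VType S} :
    ∀ (p : S × VType S) (ps : List (S × VType S)),
      (∀ w ∈ p :: ps, VType.IsUnit w.2) →
      (∀ w ∈ p :: ps, TEq w.2 U) →
      phi (VType.ssumL (p :: ps)) U = ((p :: ps).map Prod.fst).sum := by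
  intro p ps
  induction ps generalizing p with
  | nil =>
      intro hu hw
      have := phi_unit (hu p (by simp)) U
      simp only [VType.ssumL, phi, this, if_pos (hw p (by simp))]
      simp
  | cons q rest ih =>
      intro hu hw
      have hp := phi_unit (hu p (by simp)) U
      have := ih q (fun w hwm => hu w (List.mem_cons_of_mem _ hwm))
        (fun w hwm => hw w (List.mem_cons_of_mem _ hwm))
      simp only [VType.ssumL, phi, hp, if_pos (hw p (by simp)), this]
      simp

lemma mem_supp_ssumL :
    ∀ (p : S × VType S) (ps : List (S × VType S)),
      (∀ w ∈ p :: ps, VType.IsUnit w.2) →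
      ∀ w ∈ p :: ps, w.2 ∈ suppS (VType.ssumL (p :: ps)) := by
  intro p ps
  induction ps generalizing p with
  | nil =>
      intro hu w hw
      obtain rfl := List.mem_singleton.1 hw
      simp only [VType.ssumL, suppS]
      rw [supp_unit (hu w (by simp))]
      exact TEq.refl _
  | cons q rest ih =>
      intro hu w hw
      simp only [VType.ssumL, suppS]
      rcases List.mem_cons.1 hw with h | h
      · subst h
        left
        rw [supp_unit (hu w (by simp))]
        exact TEq.refl _
      · right
        exact ih q (fun w' hwm => hu w' (List.mem_cons_of_mem _ hwm)) w h

lemma extract {U : VType S} (hU : VType.IsUnit U)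
    (p : S × VType S) (ps : List (S × VType S))
    (hu : ∀ w ∈ p :: ps, VType.IsUnit w.2)
    (h : TEq (VType.ssumL (p :: ps)) U) :
    (∀ w ∈ p :: ps, TEq w.2 U) ∧ ((p :: ps).map Prod.fst).sum = 1 := by
  have hmem : ∀ w ∈ p :: ps, TEq w.2 U := by
    intro w hw
    have h1 := mem_supp_ssumL p ps hu w hw
    rw [supp_congr h, supp_unit hU] at h1
    exact h1.symm
  refine ⟨hmem, ?_⟩
  have h2 := phi_congr h U
  rw [phi_ssumL p ps hu hmem, phi_unit hU U, if_pos (TEq.refl U)] at h2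
  exact h2

theorem basis_aux {Γ : Ctx S} {t : VTerm S} {T : VType S} (h : Typing Γ t T) :
    t.IsBasis → ∃ U : VType S, VType.IsUnit U ∧ TEq T U := by
  induction h with
  | ax hx hU => exact fun _ => ⟨_, hU, TEq.refl _⟩
  | zeroI _ _ => intro hb; simp [VTerm.IsBasis] at hb
  | arrI hU ht ih => exact fun _ => ⟨_, VType.IsUnit.arrow hU, TEq.refl _⟩
  | arrE U Xs p ps q qs hU hk ht hr iht ihr =>
      intro hb; simp [VTerm.IsBasis] at hb
  | smulI a _ ih => intro hb; simp [VTerm.IsBasis] at hb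
  | addI _ _ ih1 ih2 => intro hb; simp [VTerm.IsBasis] at hb
  | equiv _ e ih =>
      intro hb
      obtain ⟨U, hU, heq⟩ := ih hb
      exact ⟨U, hU, e.symm.trans heq⟩
  | faI v p ps hfree hunit hty ih =>
      intro hb
      obtain ⟨U, hU, heq⟩ := ih hb
      obtain ⟨hall, hsum⟩ := extract hU p ps hunit heq
      refine ⟨VType.fa v.1 v.2 U, VType.IsUnit.fa hU, ?_⟩
      have h1 := ssumL_smul (V := VType.fa v.1 v.2 U)
        (p.1, VType.fa v.1 v.2 p.2) (ps.map (fun w => (w.1, VType.fa v.1 v.2 w.2)))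
        (by
          intro w hw
          simp only [List.mem_cons, List.mem_map] at hw
          rcases hw with h | ⟨w', hw', rfl⟩
          · subst h; exact TEq.faCong _ _ (hall p (by simp))
          · exact TEq.faCong _ _ (hall w' (by simp [hw'])))
      simp only [List.map_cons] at h1 ⊢
      refine h1.trans ?_
      have hsum' : (p.1 :: (ps.map (fun w => (w.1, VType.fa v.1 v.2 w.2))).map Prod.fst).sum = 1 := by
        simpa [List.map_map, Function.comp_def] using hsum
      rw [hsum']
      exact TEq.oneSmul _
  | faE v A p ps hkind hunit hty ih =>
      intro hb
      obtain ⟨U, hU, heq⟩ := ih hb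
      simp only [List.map_cons] at heq
      have hu' : ∀ w ∈ (p.1, VType.fa v.1 v.2 p.2) ::
          ps.map (fun w => (w.1, VType.fa v.1 v.2 w.2)), VType.IsUnit w.2 := by
        intro w hw
        simp only [List.mem_cons, List.mem_map] at hw
        rcases hw with h | ⟨w', hw', rfl⟩
        · subst h; exact VType.IsUnit.fa (hunit p (by simp))
        · exact VType.IsUnit.fa (hunit w' (by simp [hw']))
      obtain ⟨hall, hsum⟩ := extract hU _ _ hu' heq
      -- every body is TEq to p.2
      have hbody : ∀ w ∈ p :: ps, TEq w.2 p.2 := by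
        intro w hw
        have h1 : TEq (VType.fa v.1 v.2 w.2) U := by
          rcases List.mem_cons.1 hw with h | h
          · subst h; exact hall _ List.mem_cons_self
          · exact hall (w.1, VType.fa v.1 v.2 w.2)
              (List.mem_cons_of_mem _ (List.mem_map_of_mem (f := fun (w : S × VType S) => (w.1, VType.fa v.1 v.2 w.2)) h))
        have h2 : TEq (VType.fa v.1 v.2 p.2) U := hall _ List.mem_cons_self
        exact fa_inj (h1.trans h2.symm)
      refine ⟨VType.substT p.2 v A, unit_substT (hunit p (by simp)) v hkind, ?_⟩
      have h1 := ssumL_smul (V := VType.substT p.2 v A)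
        (p.1, VType.substT p.2 v A) (ps.map (fun w => (w.1, VType.substT w.2 v A)))
        (by
          intro w hw
          simp only [List.mem_cons, List.mem_map] at hw
          rcases hw with h | ⟨w', hw', rfl⟩
          · subst h; exact TEq.refl _
          · exact substT_TEq (hbody w' (by simp [hw'])) v A)
      simp only [List.map_cons] at h1 ⊢
      refine h1.trans ?_
      have hsum' : (p.1 :: (ps.map (fun w => (w.1, VType.substT w.2 v A))).map Prod.fst).sum = 1 := by
        simpa [List.map_map, Function.comp_def] using hsum
      rw [hsum']
      exact TEq.oneSmul _

end Aux

/-- Basis terms have unit types. -/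
theorem basis_terms_unit {S : Type} [CommRing S] {Γ : Ctx S} {b : VTerm S}
    {T : VType S} (hb : VTerm.IsBasis b) (h : Typing Γ b T) :
    ∃ U : VType S, VType.IsUnit U ∧ TEq T U := by
  exact basis_aux h hb
end

section
/- If t_1, …, t_n are strongly normalising terms of λ^vec, then for any algebraic context F, the term F(t_1,…,t_n) is strongly normalising, where algebraic contexts are generated by F ::= t_i | F + G | α·F | 0. -/
/-!
Formalization of the vectorial λ-calculus (Arrighi, Díaz-Caro, Valiron):
syntax of types and terms, type equivalence, typing rules, reduction, etc.
-/

universe u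

namespace Ordinal

protected theorem zero_le (a : Ordinal.{v}) : 0 ≤ a := _root_.zero_le

noncomputable def nadd (a b : Ordinal.{v}) : Ordinal.{v} :=
  max (⨆ x : Set.Iio a, Order.succ (nadd x.1 b)) (⨆ y : Set.Iio b, Order.succ (nadd a y.1))
termination_by (a, b)
decreasing_by
  · exact Prod.Lex.left _ _ x.2
  · exact Prod.Lex.right _ y.2

end Ordinal

infixl:65 " ♯ " => Ordinal.nadd

namespace Ordinal

theorem nadd_def (a b : Ordinal.{v}) : a ♯ b =
    max (⨆ x : Set.Iio a, Order.succ (x.1 ♯ b)) (⨆ y : Set.Iio b, Order.succ (a ♯ y.1)) := by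
  rw [nadd]

theorem nadd_lt_nadd_right {a' a : Ordinal.{v}} (h : a' < a) (b : Ordinal.{v}) :
    a' ♯ b < a ♯ b := by
  rw [nadd_def a b]
  exact lt_of_lt_of_le (Order.lt_succ _)
    ((le_ciSup Ordinal.bddAbove_of_small (⟨a', h⟩ : Set.Iio a)).trans (le_max_left _ _))

theorem nadd_lt_nadd_left {b' b : Ordinal.{v}} (h : b' < b) (a : Ordinal.{v}) :
    a ♯ b' < a ♯ b := by
  rw [nadd_def a b]
  exact lt_of_lt_of_le (Order.lt_succ _)
    ((le_ciSup Ordinal.bddAbove_of_small (⟨b', h⟩ : Set.Iio b)).trans (le_max_right _ _))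

theorem nadd_le_nadd_left {b c : Ordinal.{v}} (h : b ≤ c) (a : Ordinal.{v}) : a ♯ b ≤ a ♯ c := by
  rcases h.lt_or_eq with h | rfl
  · exact (nadd_lt_nadd_left h a).le
  · exact le_rfl

theorem nadd_le_nadd_right {b c : Ordinal.{v}} (h : b ≤ c) (a : Ordinal.{v}) : b ♯ a ≤ c ♯ a := by
  rcases h.lt_or_eq with h | rfl
  · exact (nadd_lt_nadd_right h a).le
  · exact le_rfl

theorem nadd_le_iff {a b c : Ordinal.{v}} :
    a ♯ b ≤ c ↔ (∀ a' < a, a' ♯ b < c) ∧ ∀ b' < b, a ♯ b' < c := by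
  constructor
  · intro h
    exact ⟨fun a' ha => lt_of_lt_of_le (nadd_lt_nadd_right ha b) h,
      fun b' hb => lt_of_lt_of_le (nadd_lt_nadd_left hb a) h⟩
  · rintro ⟨h1, h2⟩
    rw [nadd_def]
    exact max_le (ciSup_le' fun x => Order.succ_le_of_lt (h1 x.1 x.2))
      (ciSup_le' fun y => Order.succ_le_of_lt (h2 y.1 y.2))

theorem lt_nadd_iff {d a b : Ordinal.{v}} (h : d < a ♯ b) :
    (∃ a' < a, d ≤ a' ♯ b) ∨ ∃ b' < b, d ≤ a ♯ b' := by
  rw [nadd_def] at h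
  rcases lt_max_iff.1 h with h | h
  · obtain ⟨x, hx⟩ := Ordinal.lt_iSup_iff.1 h
    exact Or.inl ⟨x.1, x.2, Order.lt_succ_iff.1 hx⟩
  · obtain ⟨y, hy⟩ := Ordinal.lt_iSup_iff.1 h
    exact Or.inr ⟨y.1, y.2, Order.lt_succ_iff.1 hy⟩

theorem nadd_comm : ∀ a b : Ordinal.{v}, a ♯ b = b ♯ a := by
  intro a
  induction a using WellFoundedLT.induction with
  | _ a iha =>
    intro b
    induction b using WellFoundedLT.induction with
    | _ b ihb =>
      apply le_antisymm
      · refine nadd_le_iff.2 ⟨fun a' ha => ?_, fun b' hb => ?_⟩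
        · rw [iha a' ha]; exact nadd_lt_nadd_left ha _
        · rw [ihb b' hb]; exact nadd_lt_nadd_right hb _
      · refine nadd_le_iff.2 ⟨fun b' hb => ?_, fun a' ha => ?_⟩
        · rw [← ihb b' hb]; exact nadd_lt_nadd_left hb _
        · rw [← iha a' ha]; exact nadd_lt_nadd_right ha _

theorem nadd_zero (a : Ordinal.{v}) : a ♯ 0 = a := by
  apply le_antisymm
  · induction a using WellFoundedLT.induction with
    | _ a ih =>
      refine nadd_le_iff.2 ⟨fun a' ha => lt_of_le_of_lt (ih a' ha) ha, fun c hc => ?_⟩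
      exact absurd hc (not_lt_of_ge (Ordinal.zero_le c))
  · exact StrictMono.le_apply (f := fun x => x ♯ 0) (fun x y h => nadd_lt_nadd_right h 0)

theorem nadd_assoc : ∀ a b c : Ordinal.{v}, a ♯ b ♯ c = a ♯ (b ♯ c) := by
  intro a
  induction a using WellFoundedLT.induction with
  | _ a iha =>
  intro b
  induction b using WellFoundedLT.induction with
  | _ b ihb =>
  intro c
  induction c using WellFoundedLT.induction with
  | _ c ihc =>
  apply le_antisymm
  · refine nadd_le_iff.2 ⟨fun d hd => ?_, fun c' hc => ?_⟩
    · rcases lt_nadd_iff hd with ⟨a', ha, hle⟩ | ⟨b', hb, hle⟩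
      · calc d ♯ c ≤ a' ♯ b ♯ c := nadd_le_nadd_right hle c
          _ = a' ♯ (b ♯ c) := iha a' ha b c
          _ < a ♯ (b ♯ c) := nadd_lt_nadd_right ha _
      · calc d ♯ c ≤ a ♯ b' ♯ c := nadd_le_nadd_right hle c
          _ = a ♯ (b' ♯ c) := ihb b' hb c
          _ < a ♯ (b ♯ c) := nadd_lt_nadd_left (nadd_lt_nadd_right hb c) a
    · rw [ihc c' hc]; exact nadd_lt_nadd_left (nadd_lt_nadd_left hc b) a
  · refine nadd_le_iff.2 ⟨fun a' ha => ?_, fun d hd => ?_⟩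
    · rw [← iha a' ha]; exact nadd_lt_nadd_right (nadd_lt_nadd_right ha b) c
    · rcases lt_nadd_iff hd with ⟨b', hb, hle⟩ | ⟨c', hc, hle⟩
      · calc a ♯ d ≤ a ♯ (b' ♯ c) := nadd_le_nadd_left hle a
          _ = a ♯ b' ♯ c := (ihb b' hb c).symm
          _ < a ♯ b ♯ c := nadd_lt_nadd_right (nadd_lt_nadd_left hb a) c
      · calc a ♯ d ≤ a ♯ (b ♯ c') := nadd_le_nadd_left hle a
          _ = a ♯ b ♯ c' := (ihc c' hc).symm
          _ < a ♯ b ♯ c := nadd_lt_nadd_left hc _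

end Ordinal

/-! ### Auxiliary development for Statement 14 -/

section SNProof

open Ordinal

variable {S : Type} [CommRing S]

/-- Terms built from SN terms by algebraic constructors. -/
inductive Alg : VTerm S → Prop where
  | sn {t : VTerm S} : SN t → Alg t
  | add {t r : VTerm S} : Alg t → Alg r → Alg (VTerm.add t r)
  | smul {t : VTerm S} (a : S) : Alg t → Alg (VTerm.smul a t)
  | zero : Alg VTerm.zero

theorem Red1.ofAC {t t' r : VTerm S} (h : ACEq t t') (hr : Red1 t' r) : Red1 t r :=
  let ⟨f, hf⟩ := hr; ⟨f, Red.ac h hf (ACEq.refl r)⟩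

theorem Red1.smulCtx {t r : VTerm S} (a : S) (h : Red1 t r) :
    Red1 (VTerm.smul a t) (VTerm.smul a r) :=
  let ⟨f, hf⟩ := h; ⟨f, Red.smulCtx a hf⟩

theorem Red1.addR {t r : VTerm S} (u : VTerm S) (h : Red1 t r) :
    Red1 (VTerm.add u t) (VTerm.add u r) :=
  let ⟨f, hf⟩ := h; ⟨f, Red.addCtx u hf⟩

theorem Red1.addL {t r : VTerm S} (u : VTerm S) (h : Red1 t r) :
    Red1 (VTerm.add t u) (VTerm.add r u) :=
  let ⟨f, hf⟩ := h; ⟨f, Red.ac (ACEq.comm _ _) (Red.addCtx u hf) (ACEq.comm _ _)⟩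

theorem sn_red1 {t r : VTerm S} (h : SN t) (hr : Red1 t r) : SN r := h.inv hr

theorem sn_of_aceq {t t' : VTerm S} (h : ACEq t t') (ht : SN t) : SN t' :=
  Acc.intro _ fun r hr => ht.inv (Red1.ofAC h hr)

theorem sn_of_image (g : VTerm S → VTerm S)
    (hg : ∀ a b, Red1 a b → Red1 (g a) (g b)) :
    ∀ x, SN (g x) → SN x := by
  have H : ∀ z, Acc (fun a b : VTerm S => Red1 b a) z → ∀ x, z = g x → SN x := by
    intro z hz
    induction hz with
    | intro z hz ih =>
      rintro x rfl
      exact Acc.intro x fun y hy => ih (g y) (hg x y hy) y rfl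
  exact fun x h => H (g x) h x rfl

theorem sn_addL {u v : VTerm S} (h : SN (VTerm.add u v)) : SN u :=
  sn_of_image (fun w => VTerm.add w v) (fun _ _ hr => Red1.addL v hr) u h

theorem sn_addR {u v : VTerm S} (h : SN (VTerm.add u v)) : SN v :=
  sn_of_image (fun w => VTerm.add u w) (fun _ _ hr => Red1.addR u hr) v h

theorem sn_smul {a : S} {u : VTerm S} (h : SN (VTerm.smul a u)) : SN u :=
  sn_of_image (fun w => VTerm.smul a w) (fun _ _ hr => Red1.smulCtx a hr) u h

-- The rank of an SN term (0 for non-SN terms).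
open Classical in
noncomputable def rk (t : VTerm S) : Ordinal :=
  if h : SN t then h.rank else 0

theorem rk_lt {t r : VTerm S} (h : SN t) (hr : Red1 t r) : rk r < rk t := by
  unfold rk
  rw [dif_pos h, dif_pos (show SN r from h.inv hr)]
  exact Acc.rank_lt_of_rel h hr

theorem rk_le {t : VTerm S} (h : SN t) {c : Ordinal}
    (H : ∀ z, Red1 t z → rk z < c) : rk t ≤ c := by
  unfold rk
  rw [dif_pos h, Acc.rank_eq (h := (h : Acc (fun a b : VTerm S => Red1 b a) t))]
  apply Ordinal.iSup_le
  rintro ⟨z, hz⟩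
  rw [Order.succ_le_iff]
  have hrz : rk z = (show SN z from h.inv hz).rank := dif_pos (show SN z from h.inv hz)
  rw [← hrz]
  exact H z hz

theorem lt_rk {t : VTerm S} (h : SN t) {c : Ordinal} (hc : c < rk t) :
    ∃ z, Red1 t z ∧ c ≤ rk z := by
  unfold rk at hc
  rw [dif_pos h, Acc.rank_eq (h := (h : Acc (fun a b : VTerm S => Red1 b a) t)), Ordinal.lt_iSup_iff] at hc
  obtain ⟨⟨z, hz⟩, hlt⟩ := hc
  rw [Order.lt_succ_iff] at hlt
  refine ⟨z, hz, ?_⟩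
  rw [show rk z = (show SN z from h.inv hz).rank from dif_pos (show SN z from h.inv hz)]
  exact hlt

theorem rk_eq_of_aceq {a b : VTerm S} (h : ACEq a b) : rk a = rk b := by
  by_cases hb : SN b
  · have ha : SN a := sn_of_aceq (ACEq.symm h) hb
    refine le_antisymm (rk_le ha fun z hz => ?_) (rk_le hb fun z hz => ?_)
    · exact rk_lt hb (Red1.ofAC (ACEq.symm h) hz)
    · exact rk_lt ha (Red1.ofAC h hz)
  · have ha : ¬ SN a := fun ha => hb (sn_of_aceq h ha)
    unfold rk
    rw [dif_neg ha, dif_neg hb]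

theorem rk_le_of_sim (g : VTerm S → VTerm S)
    (hg : ∀ a b, Red1 a b → Red1 (g a) (g b)) :
    ∀ x, SN x → SN (g x) → rk x ≤ rk (g x) := by
  intro x hx
  induction hx with
  | intro x hx ih =>
    intro hgx
    refine rk_le (Acc.intro x hx) fun z hz => ?_
    exact lt_of_le_of_lt (ih z hz (sn_red1 hgx (hg x z hz))) (rk_lt hgx (hg x z hz))

theorem rk_nadd_le :
    ∀ u : VTerm S, SN u → ∀ v : VTerm S, SN v → SN (VTerm.add u v) →
      rk u ♯ rk v ≤ rk (VTerm.add u v) := by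
  intro u hu
  induction hu with
  | intro u hu ihu =>
    intro v hv
    induction hv with
    | intro v hv ihv =>
      intro hsum
      refine Ordinal.nadd_le_iff.2 ⟨fun b' hb' => ?_, fun c' hc' => ?_⟩
      · obtain ⟨u', hu', hle⟩ := lt_rk (Acc.intro u hu) hb'
        calc b' ♯ rk v ≤ rk u' ♯ rk v := Ordinal.nadd_le_nadd_right hle _
          _ ≤ rk (VTerm.add u' v) :=
            ihu u' hu' v (Acc.intro v hv) (sn_red1 hsum (Red1.addL v hu'))
          _ < rk (VTerm.add u v) := rk_lt hsum (Red1.addL v hu')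
      · obtain ⟨v', hv', hle⟩ := lt_rk (Acc.intro v hv) hc'
        calc rk u ♯ c' ≤ rk u ♯ rk v' := Ordinal.nadd_le_nadd_left hle _
          _ ≤ rk (VTerm.add u v') := ihv v' hv' (sn_red1 hsum (Red1.addR u hv'))
          _ < rk (VTerm.add u v) := rk_lt hsum (Red1.addR u hv')

/-- Structural ordinal measure: rank at non-algebraic heads,
natural sum through the algebraic skeleton. -/
noncomputable def sig (t : VTerm S) : Ordinal :=
  match t with
  | VTerm.var n => rk (S := S) (VTerm.var n)
  | VTerm.lam x t => rk (S := S) (VTerm.lam x t)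
  | VTerm.app t r => rk (S := S) (VTerm.app t r)
  | VTerm.zero => 0
  | VTerm.smul _ t => sig t
  | VTerm.add t r => sig t ♯ sig r

theorem sig_le_rk : ∀ t : VTerm S, SN t → sig t ≤ rk t := by
  intro t
  induction t with
  | var n => exact fun _ => le_rfl
  | lam x t ih => exact fun _ => le_rfl
  | app t r iht ihr => exact fun _ => le_rfl
  | zero => exact fun _ => Ordinal.zero_le _
  | smul a t ih =>
    intro h
    calc sig (VTerm.smul a t) = sig t := rfl
      _ ≤ rk t := ih (sn_smul h)
      _ ≤ rk (VTerm.smul a t) :=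
        rk_le_of_sim (fun w => VTerm.smul a w) (fun _ _ hr => Red1.smulCtx a hr)
          t (sn_smul h) h
  | add t r iht ihr =>
    intro h
    calc sig (VTerm.add t r) = sig t ♯ sig r := rfl
      _ ≤ rk t ♯ sig r := Ordinal.nadd_le_nadd_right (iht (sn_addL h)) _
      _ ≤ rk t ♯ rk r := Ordinal.nadd_le_nadd_left (ihr (sn_addR h)) _
      _ ≤ rk (VTerm.add t r) := rk_nadd_le t (sn_addL h) r (sn_addR h) h

/-- Polynomial weight strictly decreasing under the algebraic rules. -/
def W : VTerm S → ℕ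
  | VTerm.var _ => 1
  | VTerm.lam _ t => W t + 1
  | VTerm.app t r => W t + W r + 1
  | VTerm.zero => 1
  | VTerm.smul _ t => 2 * W t + 1
  | VTerm.add t r => W t + W r + 2

theorem W_pos : ∀ t : VTerm S, 1 ≤ W t := by
  intro t
  induction t <;> simp [W] <;> omega

theorem W_aceq {a b : VTerm S} (h : ACEq a b) : W a = W b := by
  induction h <;> simp_all [W] <;> omega

theorem sig_aceq {a b : VTerm S} (h : ACEq a b) : sig a = sig b := by
  induction h with
  | refl t => rfl
  | symm _ ih => exact ih.symm
  | trans _ _ ih1 ih2 => exact ih1.trans ih2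
  | comm t r => exact Ordinal.nadd_comm _ _
  | assoc t r u => exact (Ordinal.nadd_assoc _ _ _).symm
  | lamCong x h ih => exact rk_eq_of_aceq (ACEq.lamCong x h)
  | appCong h1 h2 ih1 ih2 => exact rk_eq_of_aceq (ACEq.appCong h1 h2)
  | smulCong a h ih => exact ih
  | addCong h1 h2 ih1 ih2 => show _ ♯ _ = _ ♯ _; rw [ih1, ih2]

/-- Lexicographic decrease of the combined measure. -/
def Dec (t r : VTerm S) : Prop :=
  sig r < sig t ∨ (sig r = sig t ∧ W r < W t)

theorem dec_of_le {t r : VTerm S} (h1 : sig r ≤ sig t) (h2 : W r < W t) : Dec t r :=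
  h1.lt_or_eq.imp id fun e => ⟨e, h2⟩

theorem alg_app_sn {t r : VTerm S} (h : Alg (VTerm.app t r)) : SN (VTerm.app t r) := by
  cases h with | sn h => exact h

theorem alg_lam_sn {x : ℕ} {t : VTerm S} (h : Alg (VTerm.lam x t)) : SN (VTerm.lam x t) := by
  cases h with | sn h => exact h

theorem alg_smul_iff {a : S} {t : VTerm S} : Alg (VTerm.smul a t) ↔ Alg t := by
  constructor
  · intro h
    cases h with
    | sn h => exact Alg.sn (sn_smul h)
    | smul a h => exact h
  · exact Alg.smul a

theorem alg_add_iff {t r : VTerm S} : Alg (VTerm.add t r) ↔ Alg t ∧ Alg r := by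
  constructor
  · intro h
    cases h with
    | sn h => exact ⟨Alg.sn (sn_addL h), Alg.sn (sn_addR h)⟩
    | add h1 h2 => exact ⟨h1, h2⟩
  · exact fun ⟨h1, h2⟩ => Alg.add h1 h2

theorem alg_lam_iff {x : ℕ} {t : VTerm S} : Alg (VTerm.lam x t) ↔ SN (VTerm.lam x t) :=
  ⟨alg_lam_sn, Alg.sn⟩

theorem alg_app_iff {t r : VTerm S} : Alg (VTerm.app t r) ↔ SN (VTerm.app t r) :=
  ⟨alg_app_sn, Alg.sn⟩

theorem alg_aceq {a b : VTerm S} (h : ACEq a b) : Alg a ↔ Alg b := by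
  induction h with
  | refl t => exact Iff.rfl
  | symm _ ih => exact ih.symm
  | trans _ _ ih1 ih2 => exact ih1.trans ih2
  | comm t r => rw [alg_add_iff, alg_add_iff]; exact and_comm
  | assoc t r u =>
    rw [alg_add_iff, alg_add_iff, alg_add_iff, alg_add_iff]
    exact (and_assoc).symm
  | lamCong x h ih =>
    rw [alg_lam_iff, alg_lam_iff]
    exact ⟨sn_of_aceq (ACEq.lamCong x h), sn_of_aceq (ACEq.symm (ACEq.lamCong x h))⟩
  | appCong h1 h2 ih1 ih2 =>
    rw [alg_app_iff, alg_app_iff]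
    exact ⟨sn_of_aceq (ACEq.appCong h1 h2), sn_of_aceq (ACEq.symm (ACEq.appCong h1 h2))⟩
  | smulCong a h ih => rw [alg_smul_iff, alg_smul_iff]; exact ih
  | addCong h1 h2 ih1 ih2 => rw [alg_add_iff, alg_add_iff]; exact and_congr ih1 ih2

theorem key_sn {t r : VTerm S} (ht : SN t) (hr : Red1 t r) (he : sig t = rk t) :
    Alg r ∧ Dec t r := by
  refine ⟨Alg.sn (ht.inv hr), Or.inl ?_⟩
  rw [he]
  exact lt_of_le_of_lt (sig_le_rk r (ht.inv hr)) (rk_lt ht hr)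

theorem sig_self_le_nadd {o : Ordinal} : o ≤ o ♯ o := by
  calc o = o ♯ 0 := (Ordinal.nadd_zero o).symm
    _ ≤ o ♯ o := Ordinal.nadd_le_nadd_left (Ordinal.zero_le o) o

/-- The key decrease lemma: one-step reduction preserves `Alg` and decreases
the measure `(sig, W)` lexicographically. -/
theorem key {f : Bool} {t r : VTerm S} (h : Red f t r) : Alg t → Alg r ∧ Dec t r := by
  induction h with
  | zeroSmul t =>
    intro _
    refine ⟨Alg.zero, dec_of_le (Ordinal.zero_le _) ?_⟩
    have := W_pos (S := S) t
    simp [W]; omega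
  | oneSmul t =>
    intro ha
    refine ⟨alg_smul_iff.1 ha, dec_of_le (le_of_eq rfl) ?_⟩
    simp [W]; omega
  | smulZero a =>
    intro _
    exact ⟨Alg.zero, dec_of_le (le_of_eq rfl) (by simp [W])⟩
  | smulSmul a b t =>
    intro ha
    refine ⟨Alg.smul _ (alg_smul_iff.1 (alg_smul_iff.1 ha)), dec_of_le (le_of_eq rfl) ?_⟩
    have := W_pos (S := S) t
    simp [W]
  | smulAdd a t r =>
    intro ha
    obtain ⟨h1, h2⟩ := alg_add_iff.1 (alg_smul_iff.1 ha)
    refine ⟨Alg.add (Alg.smul a h1) (Alg.smul a h2), dec_of_le (le_of_eq rfl) ?_⟩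
    simp [W]; omega
  | factor a b t =>
    intro ha
    obtain ⟨h1, _⟩ := alg_add_iff.1 ha
    refine ⟨Alg.smul _ (alg_smul_iff.1 h1), dec_of_le ?_ ?_⟩
    · exact sig_self_le_nadd
    · simp [W]; omega
  | factor1 a t =>
    intro ha
    obtain ⟨h1, _⟩ := alg_add_iff.1 ha
    refine ⟨Alg.smul _ (alg_smul_iff.1 h1), dec_of_le ?_ ?_⟩
    · exact sig_self_le_nadd
    · have := W_pos (S := S) t
      simp [W]; omega
  | factor2 t =>
    intro ha
    obtain ⟨h1, _⟩ := alg_add_iff.1 ha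
    refine ⟨Alg.smul _ h1, dec_of_le ?_ ?_⟩
    · exact sig_self_le_nadd
    · simp [W]; omega
  | addZero t =>
    intro ha
    obtain ⟨h1, _⟩ := alg_add_iff.1 ha
    refine ⟨h1, dec_of_le ?_ ?_⟩
    · exact le_of_eq (Ordinal.nadd_zero _).symm
    · simp [W]; omega
  | beta x t b hb =>
    intro ha
    exact key_sn (alg_app_sn ha) ⟨_, Red.beta x t b hb⟩ rfl
  | appAddL t r u =>
    intro ha
    exact key_sn (alg_app_sn ha) ⟨_, Red.appAddL t r u⟩ rfl
  | appAddR t r u =>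
    intro ha
    exact key_sn (alg_app_sn ha) ⟨_, Red.appAddR t r u⟩ rfl
  | appSmulL a t r =>
    intro ha
    exact key_sn (alg_app_sn ha) ⟨_, Red.appSmulL a t r⟩ rfl
  | appSmulR a t r =>
    intro ha
    exact key_sn (alg_app_sn ha) ⟨_, Red.appSmulR a t r⟩ rfl
  | appZeroL t =>
    intro ha
    exact key_sn (alg_app_sn ha) ⟨_, Red.appZeroL t⟩ rfl
  | appZeroR t =>
    intro ha
    exact key_sn (alg_app_sn ha) ⟨_, Red.appZeroR t⟩ rfl
  | smulCtx a h ih =>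
    intro ha
    obtain ⟨hr, hdec⟩ := ih (alg_smul_iff.1 ha)
    refine ⟨Alg.smul a hr, ?_⟩
    rcases hdec with h1 | ⟨h1, h2⟩
    · exact Or.inl h1
    · exact Or.inr ⟨h1, by simp [W]; omega⟩
  | addCtx u h ih =>
    intro ha
    obtain ⟨h1, h2⟩ := alg_add_iff.1 ha
    obtain ⟨hr, hdec⟩ := ih h2
    refine ⟨Alg.add h1 hr, ?_⟩
    rcases hdec with hd | ⟨hd, hw⟩
    · exact Or.inl (Ordinal.nadd_lt_nadd_left hd _)
    · refine Or.inr ⟨?_, by simp [W]; omega⟩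
      show _ ♯ _ = _ ♯ _
      rw [hd]
  | appCtxR u h ih =>
    intro ha
    exact key_sn (alg_app_sn ha) ⟨_, Red.appCtxR u h⟩ rfl
  | appCtxL u h ih =>
    intro ha
    exact key_sn (alg_app_sn ha) ⟨_, Red.appCtxL u h⟩ rfl
  | lamCtx x h ih =>
    intro ha
    exact key_sn (alg_lam_sn ha) ⟨_, Red.lamCtx x h⟩ rfl
  | ac h1 h2 h3 ih =>
    intro ha
    obtain ⟨hr, hdec⟩ := ih ((alg_aceq h1).1 ha)
    refine ⟨(alg_aceq h3).1 hr, ?_⟩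
    have e1 := sig_aceq h1
    have e3 := sig_aceq h3
    have w1 := W_aceq h1
    have w3 := W_aceq h3
    rcases hdec with hd | ⟨hd, hw⟩
    · exact Or.inl (by rw [← e3, e1]; exact hd)
    · exact Or.inr ⟨by rw [← e3, e1]; exact hd, by rw [← w3, w1]; exact hw⟩

/-- The combined single ordinal measure. -/
noncomputable def mu (t : VTerm S) : Ordinal := ω * sig t + (W t : Ordinal)

theorem mu_lt {t r : VTerm S} (h : Dec t r) : mu r < mu t := by
  rcases h with h | ⟨h1, h2⟩
  · calc ω * sig r + (W r : Ordinal) < ω * sig r + ω :=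
        add_lt_add_right (Ordinal.nat_lt_omega0 _) _
      _ = ω * Order.succ (sig r) := (Ordinal.mul_succ _ _).symm
      _ ≤ ω * sig t := mul_le_mul_right (Order.succ_le_iff.2 h) _
      _ ≤ ω * sig t + (W t : Ordinal) := le_self_add
  · rw [mu, mu, h1]
    exact add_lt_add_right (Nat.cast_lt.2 h2) _

theorem alg_sn {t : VTerm S} (h : Alg t) : SN t := by
  have main : ∀ o : Ordinal, ∀ t : VTerm S, mu t = o → Alg t → SN t := by
    intro o
    induction o using Ordinal.induction with
    | h o IH =>
      rintro t rfl ht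
      constructor
      intro r hr
      obtain ⟨f, hf⟩ := hr
      obtain ⟨har, hdec⟩ := key hf ht
      exact IH (mu r) (mu_lt hdec) r rfl har
  exact main _ t rfl h

end SNProof

/-- a linear (algebraic) combination of strongly normalising
terms is strongly normalising. -/
theorem sn_algebraic_context {S : Type} [CommRing S]
    (ts : List (VTerm S)) (h : ∀ t ∈ ts, SN t) (F : AlgCtx S) :
    SN (F.fill ts) := by
  apply alg_sn
  induction F with
  | idx i =>
    show Alg (ts.getD i VTerm.zero)
    by_cases hi : i < ts.length
    · rw [List.getD_eq_getElem ts VTerm.zero hi]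
      exact Alg.sn (h _ (List.getElem_mem hi))
    · rw [List.getD_eq_default ts VTerm.zero (le_of_not_gt hi)]
      exact Alg.zero
  | add F G ihF ihG => exact Alg.add ihF ihG
  | smul a F ih => exact Alg.smul a ih
  | zero => exact Alg.zero
end

section
/- Arrows comparison: if V → R ≽^t_{𝒱,Γ} ∀X⃗.(U → T) (the ordering generated by ∀-introductions and ∀-eliminations at variables not free in Γ, together with type equivalence), then there exist types A⃗ and variables Y⃗ ∉ FV(Γ) such that U → T ≡ (V → R)[A⃗/Y⃗]. -/
/-!
Formalization of the vectorial λ-calculus (Arrighi, Díaz-Caro, Valiron):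
syntax of types and terms, type equivalence, typing rules, reduction, etc.
-/

universe u

section ArrowsComparisonAux

variable {S : Type} [CommRing S]

/-- The setoid of types modulo `TEq`. -/
def teqS (S : Type) [CommRing S] : Setoid (VType S) :=
  ⟨TEq, ⟨TEq.refl, TEq.symm, TEq.trans⟩⟩

/-- Shorthand for the `TEq`-class of a type. -/
def qk (U : VType S) : Quotient (teqS S) := Quotient.mk (teqS S) U

lemma qk_exact {U T : VType S} (h : qk U = qk T) : TEq U T := Quotient.exact h

lemma qk_sound {U T : VType S} (h : TEq U T) : qk U = qk T := Quotient.sound h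

/-- Head information of an atom: its top constructor together with the
`TEq`-classes of its immediate subterms. -/
inductive HInfo (S : Type) [CommRing S] : Type where
  | var : Bool → ℕ → HInfo S
  | arr : Quotient (teqS S) → Quotient (teqS S) → HInfo S
  | fa : Bool → ℕ → Quotient (teqS S) → HInfo S

/-- Atoms: types that are not a sum or scalar multiple at the top. -/
def VAtom : VType S → Prop
  | VType.smul _ _ => False
  | VType.add _ _ => False
  | _ => True

/-- Head information of an atom. -/
def atomInfo : VType S → HInfo S
  | VType.uvar n => HInfo.var true n
  | VType.gvar n => HInfo.var false n
  | VType.arrow U T => HInfo.arr (qk U) (qk T)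
  | VType.fa b n W => HInfo.fa b n (qk W)
  | VType.smul _ _ => HInfo.var true 0
  | VType.add _ _ => HInfo.var true 0

/-- The set of head informations of the atoms occurring in a type. -/
def info : VType S → Set (HInfo S)
  | VType.smul _ T => info T
  | VType.add T R => info T ∪ info R
  | W => {atomInfo W}

lemma info_smul (a : S) (T : VType S) : info (VType.smul a T) = info T := rfl
lemma info_add (T R : VType S) : info (VType.add T R) = info T ∪ info R := rfl

lemma info_atom {W : VType S} (h : VAtom W) : info W = {atomInfo W} := by
  cases W <;> first | rfl | exact absurd h (by simp [VAtom])

lemma isAtom_of_isUnit {W : VType S} (h : VType.IsUnit W) : VAtom W := by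
  cases h <;> trivial

/-- `info` is invariant under `TEq`. -/
lemma info_teq {T R : VType S} (h : TEq T R) : info T = info R := by
  induction h with
  | refl => rfl
  | symm _ ih => exact ih.symm
  | trans _ _ ih1 ih2 => exact ih1.trans ih2
  | oneSmul => rfl
  | smulSmul => rfl
  | smulAdd => rfl
  | addSmul a b T => simp [info_smul, info_add]
  | comm T R => exact Set.union_comm _ _
  | assoc T R Q => exact (Set.union_assoc _ _ _).symm
  | arrowCong h1 h2 =>
      show ({atomInfo _} : Set (HInfo S)) = {atomInfo _}
      simp only [atomInfo, qk_sound h1, qk_sound h2]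
  | faCong b n h1 =>
      show ({atomInfo _} : Set (HInfo S)) = {atomInfo _}
      simp only [atomInfo, qk_sound h1]
  | smulCong a _ ih => exact ih
  | addCong _ _ ih1 ih2 => simp [info_add, ih1, ih2]

/-- The total coefficient of each `TEq`-class of atoms in a type. -/
noncomputable def coeff : VType S → (Quotient (teqS S) →₀ S)
  | VType.smul a T => a • coeff T
  | VType.add T R => coeff T + coeff R
  | W => Finsupp.single (qk W) 1

lemma coeff_smul (a : S) (T : VType S) : coeff (VType.smul a T) = a • coeff T := rfl
lemma coeff_add (T R : VType S) : coeff (VType.add T R) = coeff T + coeff R := rfl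
lemma coeff_atom {W : VType S} (h : VAtom W) : coeff W = Finsupp.single (qk W) 1 := by
  cases W <;> first | rfl | exact absurd h (by simp [VAtom])

/-- `coeff` is invariant under `TEq`. -/
lemma coeff_teq {T R : VType S} (h : TEq T R) : coeff T = coeff R := by
  induction h with
  | refl => rfl
  | symm _ ih => exact ih.symm
  | trans _ _ ih1 ih2 => exact ih1.trans ih2
  | oneSmul T => show (1 : S) • coeff T = coeff T; exact one_smul _ _
  | smulSmul a b T =>
      show a • (b • coeff T) = (a * b) • coeff T
      rw [mul_smul]
  | smulAdd a T R =>
      show a • coeff T + a • coeff R = a • (coeff T + coeff R)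
      rw [smul_add]
  | addSmul a b T =>
      show a • coeff T + b • coeff T = (a + b) • coeff T
      rw [add_smul]
  | comm T R => exact add_comm _ _
  | assoc T R Q => exact (add_assoc _ _ _).symm
  | arrowCong h1 h2 =>
      show Finsupp.single (qk _) 1 = Finsupp.single (qk _) 1
      rw [qk_sound (TEq.arrowCong h1 h2)]
  | faCong b n h1 =>
      show Finsupp.single (qk _) 1 = Finsupp.single (qk _) 1
      rw [qk_sound (TEq.faCong b n h1)]
  | smulCong a _ ih => show _ • _ = _ • _; rw [ih]
  | addCong _ _ ih1 ih2 => show _ + _ = _ + _; rw [ih1, ih2]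

/-- `TEq` is preserved by type substitution. -/
lemma teq_substT {T R : VType S} (v : Bool × ℕ) (A : VType S) (h : TEq T R) :
    TEq (VType.substT T v A) (VType.substT R v A) := by
  induction h with
  | refl => exact TEq.refl _
  | symm _ ih => exact ih.symm
  | trans _ _ ih1 ih2 => exact ih1.trans ih2
  | oneSmul T => exact TEq.oneSmul _
  | smulSmul a b T => exact TEq.smulSmul _ _ _
  | smulAdd a T R => exact TEq.smulAdd _ _ _
  | addSmul a b T => exact TEq.addSmul _ _ _
  | comm T R => exact TEq.comm _ _
  | assoc T R Q => exact TEq.assoc _ _ _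
  | arrowCong _ _ ih1 ih2 => exact TEq.arrowCong ih1 ih2
  | @faCong b n T' R' h1 ih =>
      show TEq (VType.substT (VType.fa b n T') v A) (VType.substT (VType.fa b n R') v A)
      simp only [VType.substT]
      split
      · exact TEq.faCong _ _ h1
      · exact TEq.faCong _ _ ih
  | smulCong a _ ih => exact TEq.smulCong _ ih
  | addCong _ _ ih1 ih2 => exact TEq.addCong ih1 ih2

lemma substT_faMany (v : Bool × ℕ) (A : VType S) :
    ∀ (Zs : List (Bool × ℕ)) (W : VType S),
      VType.substT (VType.faMany Zs W) v A =
        if v ∈ Zs then VType.faMany Zs W else VType.faMany Zs (VType.substT W v A)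
  | [], W => by simp [VType.faMany]
  | Z :: Zs, W => by
      show VType.substT (VType.fa Z.1 Z.2 (VType.faMany Zs W)) v A = _
      simp only [VType.substT]
      rcases eq_or_ne v Z with hv | hv
      · have : v = (Z.1, Z.2) := by rw [hv]
        rw [if_pos this, if_pos (by simp [hv])]
        rfl
      · have : v ≠ (Z.1, Z.2) := by simpa using hv
        rw [if_neg this, substT_faMany v A Zs W]
        by_cases hmem : v ∈ Zs
        · rw [if_pos hmem, if_pos (by simp [hmem])]
          rfl
        · rw [if_neg hmem, if_neg (by simp [hv, hmem])]
          rfl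

lemma substMany_nil (T : VType S) : VType.substMany T [] [] = T := rfl

lemma foldl_substT_arrow (V R : VType S) :
    ∀ l : List ((Bool × ℕ) × VType S),
      l.foldl (fun T p => VType.substT T p.1 p.2) (VType.arrow V R) =
        VType.arrow (l.foldl (fun T p => VType.substT T p.1 p.2) V)
          (l.foldl (fun T p => VType.substT T p.1 p.2) R) := by
  intro l
  induction l generalizing V R with
  | nil => rfl
  | cons p l ih => exact ih _ _

lemma substMany_arrow (V R : VType S) (Ys : List (Bool × ℕ)) (As : List (VType S)) :
    VType.substMany (VType.arrow V R) Ys As =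
      VType.arrow (VType.substMany V Ys As) (VType.substMany R Ys As) :=
  foldl_substT_arrow V R _

lemma substMany_append (T : VType S) (Ys : List (Bool × ℕ)) (As : List (VType S))
    (X : Bool × ℕ) (A : VType S) (hl : Ys.length = As.length) :
    VType.substMany T (Ys ++ [X]) (As ++ [A]) =
      VType.substT (VType.substMany T Ys As) X A := by
  unfold VType.substMany
  rw [List.zip_append hl, List.foldl_append]
  rfl

lemma zip_append_single (Ys : List (Bool × ℕ)) (As : List (VType S))
    (X : Bool × ℕ) (A : VType S) (hl : Ys.length = As.length) :
    (Ys ++ [X]).zip (As ++ [A]) = Ys.zip As ++ [(X, A)] := by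
  rw [List.zip_append hl]; rfl

lemma info_ssumL : ∀ (l : List (S × VType S)), l ≠ [] →
    info (VType.ssumL l) = {x | ∃ p ∈ l, x ∈ info p.2}
  | [], h => absurd rfl h
  | [p], _ => by
      show info (VType.smul p.1 p.2) = _
      rw [info_smul]
      ext x; simp
  | p :: q :: l, _ => by
      show info (VType.add (VType.smul p.1 p.2) (VType.ssumL (q :: l))) = _
      rw [info_add, info_smul, info_ssumL (q :: l) (by simp)]
      ext x
      simp only [Set.mem_union, Set.mem_setOf_eq, List.mem_cons]
      constructor
      · rintro (hx | ⟨r, hr, hx⟩)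
        · exact ⟨p, Or.inl rfl, hx⟩
        · exact ⟨r, Or.inr hr, hx⟩
      · rintro ⟨r, (rfl | hr), hx⟩
        · exact Or.inl hx
        · exact Or.inr ⟨r, hr, hx⟩

lemma coeff_ssumL_const (B : VType S) :
    ∀ (l : List (S × VType S)), l ≠ [] → (∀ p ∈ l, VAtom p.2) → (∀ p ∈ l, TEq p.2 B) →
      coeff (VType.ssumL l) = Finsupp.single (qk B) (l.map Prod.fst).sum
  | [], h, _, _ => absurd rfl h
  | [p], _, hat, hall => by
      show coeff (VType.smul p.1 p.2) = _
      rw [coeff_smul, coeff_atom (hat p (by simp)), qk_sound (hall p (by simp))]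
      simp [Finsupp.smul_single]
  | p :: q :: l, _, hat, hall => by
      show coeff (VType.add (VType.smul p.1 p.2) (VType.ssumL (q :: l))) = _
      rw [coeff_add, coeff_smul,
        coeff_ssumL_const B (q :: l) (by simp) (fun r hr => hat r (List.mem_cons_of_mem _ hr))
          (fun r hr => hall r (List.mem_cons_of_mem _ hr)),
        coeff_atom (hat p (by simp)), qk_sound (hall p (by simp))]
      simp [Finsupp.smul_single, Finsupp.single_add, List.sum_cons]

lemma teq_ssumL_const (C : VType S) :
    ∀ (l : List (S × VType S)), l ≠ [] → (∀ p ∈ l, TEq p.2 C) →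
      TEq (VType.ssumL l) (VType.smul (l.map Prod.fst).sum C)
  | [], h, _ => absurd rfl h
  | [p], _, hall => by
      show TEq (VType.smul p.1 p.2) _
      simpa using TEq.smulCong p.1 (hall p (by simp))
  | p :: q :: l, _, hall => by
      show TEq (VType.add (VType.smul p.1 p.2) (VType.ssumL (q :: l))) _
      have ih := teq_ssumL_const C (q :: l) (by simp)
        (fun r hr => hall r (List.mem_cons_of_mem _ hr))
      have h1 : TEq (VType.add (VType.smul p.1 p.2) (VType.ssumL (q :: l)))
          (VType.add (VType.smul p.1 C) (VType.smul ((q :: l).map Prod.fst).sum C)) :=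
        TEq.addCong (TEq.smulCong _ (hall p (by simp))) ih
      have h2 := TEq.addSmul p.1 (((q :: l).map Prod.fst).sum) C
      simpa [List.sum_cons] using h1.trans h2

/-- Two atoms with the same head information are `TEq`. -/
lemma teq_of_atomInfo {W B : VType S} (hW : VAtom W) (hB : VAtom B)
    (h : atomInfo W = atomInfo B) : TEq W B := by
  cases hW' : W <;> cases hB' : B <;> subst hW' <;> subst hB' <;>
      simp only [VAtom] at hW hB <;> simp only [atomInfo] at h
  case uvar.uvar n m =>
    injection h with h1 h2; subst h2; exact TEq.refl _
  case uvar.gvar => injection h with h1 h2; exact Bool.noConfusion h1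
  case uvar.arrow => exact nomatch h
  case uvar.fa => exact nomatch h
  case gvar.uvar => injection h with h1 h2; exact Bool.noConfusion h1
  case gvar.gvar n m =>
    injection h with h1 h2; subst h2; exact TEq.refl _
  case gvar.arrow => exact nomatch h
  case gvar.fa => exact nomatch h
  case arrow.uvar => exact nomatch h
  case arrow.gvar => exact nomatch h
  case arrow.arrow U T V' R' =>
    injection h with h1 h2
    exact TEq.arrowCong (qk_exact h1) (qk_exact h2)
  case arrow.fa => exact nomatch h
  case fa.uvar => exact nomatch h
  case fa.gvar => exact nomatch h
  case fa.arrow => exact nomatch h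
  case fa.fa b n W' b' n' W'' =>
    injection h with h1 h2 h3
    subst h1; subst h2
    exact TEq.faCong _ _ (qk_exact h3)

/-- If `ssumL l ≡ B` with every summand an atom and `B` an atom, then every
summand is `TEq` to `B`. -/
lemma summand_teq {l : List (S × VType S)} {B : VType S} (hne : l ≠ [])
    (hat : ∀ p ∈ l, VAtom p.2) (hB : VAtom B) (h : TEq (VType.ssumL l) B) :
    ∀ p ∈ l, TEq p.2 B := by
  intro p hp
  have hinfo : info (VType.ssumL l) = info B := info_teq h
  rw [info_ssumL l hne, info_atom hB] at hinfo
  have : atomInfo p.2 ∈ ({atomInfo B} : Set (HInfo S)) := by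
    rw [← hinfo]
    exact ⟨p, hp, by rw [info_atom (hat p hp)]; exact rfl⟩
  exact teq_of_atomInfo (hat p hp) hB this

/-- If additionally the scalars are accounted for, the coefficients sum to 1. -/
lemma sum_coeff_one {l : List (S × VType S)} {B : VType S} (hne : l ≠ [])
    (hat : ∀ p ∈ l, VAtom p.2) (hB : VAtom B) (h : TEq (VType.ssumL l) B) :
    (l.map Prod.fst).sum = 1 := by
  have hall := summand_teq hne hat hB h
  have h1 : coeff (VType.ssumL l) = coeff B := coeff_teq h
  rw [coeff_ssumL_const B l hne hat hall, coeff_atom hB] at h1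
  have := congrArg (fun f => f (qk B)) h1
  simpa using this

/-- If `ssumL l ≡ something` whose coefficients sum to 1 and all summands are
`TEq` to `C`, then `ssumL l ≡ C`. -/
lemma teq_ssumL_one {l : List (S × VType S)} {C : VType S} (hne : l ≠ [])
    (hall : ∀ p ∈ l, TEq p.2 C) (hsum : (l.map Prod.fst).sum = 1) :
    TEq (VType.ssumL l) C := by
  have h := teq_ssumL_const C l hne hall
  rw [hsum] at h
  exact h.trans (TEq.oneSmul C)

lemma faMany_cons (Z : Bool × ℕ) (Zs : List (Bool × ℕ)) (W : VType S) :
    VType.faMany (Z :: Zs) W = VType.fa Z.1 Z.2 (VType.faMany Zs W) := rfl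

lemma vAtom_faMany_arrow (Zs : List (Bool × ℕ)) (A B : VType S) :
    VAtom (VType.faMany Zs (VType.arrow A B)) := by
  cases Zs <;> trivial

/-- The invariant carried along the `TOrd` chain. -/
def Good (Γ : Ctx S) (V R : VType S) (Q : VType S) : Prop :=
  ∃ (Ys : List (Bool × ℕ)) (As : List (VType S)) (Zs : List (Bool × ℕ)),
    (∀ Y ∈ Ys, Y ∉ Γ.freeTV) ∧ Ys.length = As.length ∧
    (∀ pr ∈ Ys.zip As, VType.kindOK pr.1 pr.2) ∧
    TEq Q (VType.faMany Zs (VType.substMany (VType.arrow V R) Ys As))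

lemma good_step {Γ : Ctx S} {t : VTerm S} {X : Bool × ℕ} {V R T T' : VType S}
    (hs : StepOrd Γ t X T T') (hg : Good Γ V R T) : Good Γ V R T' := by
  obtain ⟨Ys, As, Zs, hfresh, hlen, hkind, hQ⟩ := hg
  set W₀ := VType.substMany (VType.arrow V R) Ys As with hW₀
  have hW₀arrow : W₀ = VType.arrow (VType.substMany V Ys As) (VType.substMany R Ys As) :=
    substMany_arrow V R Ys As
  cases hs with
  | faI l hne hunit hX hT1 hT2 hTeq hReq =>
      -- T ≡ ssumL l,   T' ≡ ssumL (map (fa X) l)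
      have hB : TEq (VType.ssumL l) (VType.faMany Zs W₀) := hTeq.symm.trans hQ
      have hatoms : ∀ p ∈ l, VAtom p.2 := fun p hp => isAtom_of_isUnit (hunit p hp)
      have hBat : VAtom (VType.faMany Zs W₀) := by rw [hW₀arrow]; exact vAtom_faMany_arrow _ _ _
      have hall := summand_teq hne hatoms hBat hB
      have hsum := sum_coeff_one hne hatoms hBat hB
      refine ⟨Ys, As, X :: Zs, hfresh, hlen, hkind, ?_⟩
      rw [faMany_cons]
      refine hReq.trans ?_
      have hne' : l.map (fun p => (p.1, VType.fa X.1 X.2 p.2)) ≠ [] := by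
        simpa using hne
      refine teq_ssumL_one hne' ?_ ?_
      · intro q hq
        obtain ⟨p, hp, rfl⟩ := List.mem_map.mp hq
        exact TEq.faCong X.1 X.2 (hall p hp)
      · rw [List.map_map]
        simpa [Function.comp_def] using hsum
  | faE l A hne hunit hkOK hX hT1 hT2 hTeq hReq =>
      -- T ≡ ssumL (map (fa X) l),   T' ≡ ssumL (map (substT · X A) l)
      set lf := l.map (fun p => (p.1, VType.fa X.1 X.2 p.2)) with hlf
      have hnef : lf ≠ [] := by simpa [hlf] using hne
      have hB : TEq (VType.ssumL lf) (VType.faMany Zs W₀) := hTeq.symm.trans hQ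
      have hatoms : ∀ p ∈ lf, VAtom p.2 := by
        intro p hp
        obtain ⟨q, hq, rfl⟩ := List.mem_map.mp hp
        trivial
      have hBat : VAtom (VType.faMany Zs W₀) := by rw [hW₀arrow]; exact vAtom_faMany_arrow _ _ _
      have hall := summand_teq hnef hatoms hBat hB
      have hsum : (l.map Prod.fst).sum = 1 := by
        have := sum_coeff_one hnef hatoms hBat hB
        rw [hlf, List.map_map] at this
        simpa [Function.comp_def] using this
      -- Zs must be nonempty
      obtain ⟨p₀, hp₀⟩ : ∃ p, p ∈ l := by
        cases l with | nil => exact absurd rfl hne | cons a l => exact ⟨a, by simp⟩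
      have hp₀f : (p₀.1, VType.fa X.1 X.2 p₀.2) ∈ lf :=
        List.mem_map.mpr ⟨p₀, hp₀, rfl⟩
      cases Zs with
      | nil =>
          exfalso
          have h0 : TEq (VType.fa X.1 X.2 p₀.2)
              (VType.arrow (VType.substMany V Ys As) (VType.substMany R Ys As)) := by
            rw [← hW₀arrow]; exact hall _ hp₀f
          have := info_teq h0
          rw [info_atom (by trivial), info_atom (by trivial)] at this
          have h1 := Set.singleton_eq_singleton_iff.mp this
          simp only [atomInfo] at h1
          exact nomatch h1
      | cons Z Zs' =>
          -- Each body p.2 ≡ faMany Zs' W₀, and X = Z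
          have hbody : ∀ p ∈ l, TEq p.2 (VType.faMany Zs' W₀) := by
            intro p hp
            have h0 := hall _ (List.mem_map.mpr ⟨p, hp, rfl⟩)
            rw [faMany_cons] at h0
            have := info_teq h0
            rw [info_atom (by trivial), info_atom (by trivial)] at this
            have h1 : atomInfo (VType.fa X.1 X.2 p.2) =
                atomInfo (VType.fa Z.1 Z.2 (VType.faMany Zs' W₀)) :=
              Set.singleton_eq_singleton_iff.mp this
            simp only [atomInfo] at h1
            injection h1 with h2 h3 h4
            exact qk_exact h4
          have hXZ : X = Z := by
            have h0 := hall _ hp₀f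
            rw [faMany_cons] at h0
            have := info_teq h0
            rw [info_atom (by trivial), info_atom (by trivial)] at this
            have h1 : atomInfo (VType.fa X.1 X.2 p₀.2) =
                atomInfo (VType.fa Z.1 Z.2 (VType.faMany Zs' W₀)) :=
              Set.singleton_eq_singleton_iff.mp this
            simp only [atomInfo] at h1
            injection h1 with h2 h3 h4
            exact Prod.ext h2 h3
          -- Now T' ≡ ssumL (map (substT · X A) l) ≡ substT (faMany Zs' W₀) X A
          have hCeq : ∀ p ∈ l, TEq (VType.substT p.2 X A)
              (VType.substT (VType.faMany Zs' W₀) X A) :=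
            fun p hp => teq_substT X A (hbody p hp)
          have hT'C : TEq T' (VType.substT (VType.faMany Zs' W₀) X A) := by
            refine hReq.trans ?_
            have hne'' : l.map (fun p => (p.1, VType.substT p.2 X A)) ≠ [] := by
              simpa using hne
            refine teq_ssumL_one hne'' ?_ ?_
            · intro q hq
              obtain ⟨p, hp, rfl⟩ := List.mem_map.mp hq
              exact hCeq p hp
            · rw [List.map_map]; simpa [Function.comp_def] using hsum
          rw [substT_faMany] at hT'C
          by_cases hmem : X ∈ Zs'
          · rw [if_pos hmem] at hT'C
            exact ⟨Ys, As, Zs', hfresh, hlen, hkind, hT'C⟩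
          · rw [if_neg hmem] at hT'C
            refine ⟨Ys ++ [X], As ++ [A], Zs', ?_, ?_, ?_, ?_⟩
            · intro Y hY
              rcases List.mem_append.mp hY with hY | hY
              · exact hfresh Y hY
              · rw [List.mem_singleton.mp hY]; exact hX
            · simp [hlen]
            · intro pr hpr
              rw [zip_append_single Ys As X A hlen] at hpr
              rcases List.mem_append.mp hpr with hpr | hpr
              · exact hkind pr hpr
              · rw [List.mem_singleton.mp hpr]; exact hkOK
            · rw [substMany_append _ Ys As X A hlen, ← hW₀]
              exact hT'C

lemma tord_good {Γ : Ctx S} {t : VTerm S} {𝒱 : Set (Bool × ℕ)} {V R T T' : VType S}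
    (h : TOrd Γ t 𝒱 T T') (hg : Good Γ V R T) : Good Γ V R T' := by
  induction h with
  | step hs => exact good_step hs hg
  | trans _ _ ih1 ih2 => exact ih2 (ih1 hg)
  | ofEq _ hTR =>
      obtain ⟨Ys, As, Zs, h1, h2, h3, h4⟩ := hg
      exact ⟨Ys, As, Zs, h1, h2, h3, hTR.symm.trans h4⟩

/-- Stripping matching `∀` prefixes from a `TEq` between two prefixed arrows. -/
lemma strip_faMany : ∀ (Xs Zs : List (Bool × ℕ)) (A B C D : VType S),
    TEq (VType.faMany Xs (VType.arrow A B)) (VType.faMany Zs (VType.arrow C D)) →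
    TEq (VType.arrow A B) (VType.arrow C D)
  | [], [], A, B, C, D, h => h
  | [], Z :: Zs, A, B, C, D, h => by
      exfalso
      have h' : TEq (VType.arrow A B)
          (VType.fa Z.1 Z.2 (VType.faMany Zs (VType.arrow C D))) := h
      have := info_teq h'
      rw [info_atom (show VAtom (VType.arrow A B) by trivial),
        info_atom (by trivial)] at this
      have h1 := Set.singleton_eq_singleton_iff.mp this
      simp only [atomInfo] at h1
      exact nomatch h1
  | X :: Xs, [], A, B, C, D, h => by
      exfalso
      have h' : TEq (VType.fa X.1 X.2 (VType.faMany Xs (VType.arrow A B)))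
          (VType.arrow C D) := h
      have := info_teq h'
      rw [info_atom (by trivial),
        info_atom (show VAtom (VType.arrow C D) by trivial)] at this
      have h1 := Set.singleton_eq_singleton_iff.mp this
      simp only [atomInfo] at h1
      exact nomatch h1
  | X :: Xs, Z :: Zs, A, B, C, D, h => by
      rw [faMany_cons, faMany_cons] at h
      have := info_teq h
      rw [info_atom (by trivial), info_atom (by trivial)] at this
      have h1 := Set.singleton_eq_singleton_iff.mp this
      simp only [atomInfo] at h1
      injection h1 with h2 h3 h4
      exact strip_faMany Xs Zs A B C D (qk_exact h4)

end ArrowsComparisonAux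

/-- Arrows comparison. If V → R ≽^t_{𝒱,Γ} ∀X⃗.(U → T) then
U → T ≡ (V → R)[A⃗/Y⃗] for some types A⃗ and variables Y⃗ not free in Γ. -/
theorem arrows_comparison {S : Type} [CommRing S] (Γ : Ctx S) (t : VTerm S)
    (𝒱 : Set (Bool × ℕ)) (V R U T : VType S) (Xs : List (Bool × ℕ))
    (hV : VType.IsUnit V) (hU : VType.IsUnit U)
    (h : TOrd Γ t 𝒱 (VType.arrow V R) (VType.faMany Xs (VType.arrow U T))) :
    ∃ (Ys : List (Bool × ℕ)) (As : List (VType S)),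
      (∀ Y ∈ Ys, Y ∉ Γ.freeTV) ∧ Ys.length = As.length ∧
      (∀ pr ∈ Ys.zip As, VType.kindOK pr.1 pr.2) ∧
      TEq (VType.arrow U T) (VType.substMany (VType.arrow V R) Ys As) := by
  have hbase : Good Γ V R (VType.arrow V R) :=
    ⟨[], [], [], by simp, rfl, by simp, TEq.refl _⟩
  obtain ⟨Ys, As, Zs, hfresh, hlen, hkind, hEq⟩ := tord_good h hbase
  refine ⟨Ys, As, hfresh, hlen, hkind, ?_⟩
  rw [substMany_arrow] at hEq ⊢
  exact strip_faMany Xs Zs U T _ _ hEq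
end
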